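/- Quasipattern quadratic identity (first identity of the D12 proposition): for every integer n there exist real constants c_1, c_2, c_3 (depending only on n) such that for every real r, Σ_{i+j=n} b_i b_j J_{3i}(r) J_{3j}(r) = (1/3)·b_n·J_{−3n}(r) + (1/6)·b_n·J_{3n}(2r) + c_1·J_{3n}(√2·r) + c_2·J_{3n}(√(2+√3)·r) + c_3·J_{3n}(√(2−√3)·r), where b_k = cos(kπ/4). -/

import Mathlib

/-- Bessel function of the first kind of integer order `n`, defined via the
Hansen--Bessel formula. -/
noncomputable def besselJ (n : ℤ) (r : ℝ) : ℝ :=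
  ((2 * Real.pi : ℂ)⁻¹ * ∫ θ in (0:ℝ)..(2 * Real.pi),
    Complex.exp (Complex.I * ((r * Real.cos θ - (n : ℝ) * (θ + Real.pi / 2) : ℝ) : ℂ))).re

/-- Bessel coefficients of the twelve-fold quasipattern. -/
noncomputable def qpCoeff (k : ℤ) : ℝ := Real.cos ((k : ℝ) * Real.pi / 4)

open Complex MeasureTheory Real AddCircle
open scoped Real ComplexConjugate

noncomputable section

instance fact2pi : Fact (0 < 2 * Real.pi) := ⟨by positivity⟩

/-- `exp (z e^{iθ} - z̄ e^{-iθ})` as a function on the circle. -/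
def expC (z : ℂ) : AddCircle (2 * Real.pi) → ℂ :=
  fun x => Complex.exp (z * (fourier 1 x) - (conj z) * (fourier (-1) x))

lemma expC_continuous (z : ℂ) : Continuous (expC z) := by
  apply Complex.continuous_exp.comp
  exact ((continuous_const.mul (map_continuous (fourier 1))).sub
    (continuous_const.mul (map_continuous (fourier (-1)))))

lemma fourier_coe_2pi (n : ℤ) (x : ℝ) :
    (fourier n (x : AddCircle (2 * Real.pi)) : ℂ) = Complex.exp (Complex.I * n * x) := by
  rw [fourier_coe_apply]
  congr 1
  have h : (Real.pi : ℂ) ≠ 0 := Complex.ofReal_ne_zero.mpr Real.pi_ne_zero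
  push_cast
  field_simp

lemma expC_coe (s φ x : ℝ) :
    expC ((Complex.I * s / 2) * Complex.exp (Complex.I * φ)) (x : AddCircle (2 * Real.pi))
      = Complex.exp (Complex.I * (s * Real.cos (x + φ))) := by
  rw [expC, fourier_coe_2pi, fourier_coe_2pi]
  congr 1
  have hconj : conj ((Complex.I * (s:ℂ) / 2) * Complex.exp (Complex.I * φ))
      = (-(Complex.I) * s / 2) * Complex.exp (-(Complex.I * (φ:ℂ))) := by
    rw [map_mul, map_div₀, map_mul, ← Complex.exp_conj]
    simp [Complex.conj_I, map_ofNat]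
  rw [hconj]
  have e1 : Complex.exp (Complex.I * (φ:ℂ)) * Complex.exp (Complex.I * ((1:ℤ):ℂ) * (x:ℂ))
      = Complex.exp (((x:ℂ) + (φ:ℂ)) * Complex.I) := by
    rw [← Complex.exp_add]; push_cast; ring_nf
  have e2 : Complex.exp (-(Complex.I * (φ:ℂ))) * Complex.exp (Complex.I * ((-1:ℤ):ℂ) * (x:ℂ))
      = Complex.exp (-((x:ℂ) + (φ:ℂ)) * Complex.I) := by
    rw [← Complex.exp_add]; push_cast; ring_nf
  have key := Complex.two_cos ((x:ℂ) + (φ:ℂ))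
  have hcos : ((Real.cos (x + φ) : ℝ) : ℂ) = Complex.cos ((x:ℂ) + (φ:ℂ)) := by
    rw [Complex.ofReal_cos]; push_cast; ring_nf
  rw [hcos]
  linear_combination (Complex.I * (s:ℂ) / 2) * e1 + (Complex.I * (s:ℂ) / 2) * e2
    - (Complex.I * (s:ℂ) / 2) * key

/-- The basic Fourier-Bessel coefficient. -/
def cc (s φ : ℝ) (m : ℤ) : ℂ :=
  fourierCoeff (expC ((Complex.I * s / 2) * Complex.exp (Complex.I * φ))) m

lemma cc_eq (s φ : ℝ) (m : ℤ) :
    cc s φ m = (1 / (2 * Real.pi) : ℂ) *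
      ∫ x in (0:ℝ)..(2 * Real.pi),
        Complex.exp (Complex.I * (s * Real.cos (x + φ)) - Complex.I * m * x) := by
  rw [cc, fourierCoeff_eq_intervalIntegral _ m 0]
  rw [zero_add]
  have : ∀ x : ℝ, (fourier (-m) (x : AddCircle (2*Real.pi)) : ℂ) •
      expC ((Complex.I * s / 2) * Complex.exp (Complex.I * φ)) (x : AddCircle (2*Real.pi))
      = Complex.exp (Complex.I * (s * Real.cos (x + φ)) - Complex.I * m * x) := by
    intro x
    rw [smul_eq_mul, fourier_coe_2pi, expC_coe, ← Complex.exp_add]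
    congr 1
    push_cast
    ring
  simp_rw [this]
  rw [real_smul]
  congr 1
  push_cast
  ring

lemma cont_aux (s φ : ℝ) (m : ℤ) :
    Continuous fun x : ℝ =>
      Complex.exp (Complex.I * (s * Real.cos (x + φ)) - Complex.I * m * x) := by
  fun_prop

lemma cc_shift (s φ : ℝ) (m : ℤ) :
    cc s φ m = Complex.exp (Complex.I * m * φ) * cc s 0 m := by
  rw [cc_eq, cc_eq]
  simp only [add_zero]
  have hper : Function.Periodic
      (fun x : ℝ => Complex.exp (Complex.I * (s * Real.cos x) - Complex.I * m * ((x:ℝ) : ℂ)))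
      (2 * Real.pi) := by
    intro x
    have h1 : ((x + 2*Real.pi : ℝ) : ℂ) = (x:ℂ) + 2*Real.pi := by push_cast; ring
    simp only [Real.cos_add_two_pi, h1]
    rw [show Complex.I * ((s:ℂ) * (Real.cos x : ℂ)) - Complex.I * (m:ℂ) * ((x:ℂ) + 2*(Real.pi:ℂ))
        = (Complex.I * (s * Real.cos x) - Complex.I * m * x)
          + ((-m : ℤ) : ℂ) * (2*(Real.pi:ℂ)*Complex.I) by push_cast; ring]
    rw [Complex.exp_add, Complex.exp_int_mul_two_pi_mul_I, mul_one]
  have step1 : (∫ x in (0:ℝ)..(2 * Real.pi),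
      Complex.exp (Complex.I * (s * Real.cos (x + φ)) - Complex.I * m * x))
      = Complex.exp (Complex.I * m * φ) * ∫ x in (0:ℝ)..(2 * Real.pi),
        Complex.exp (Complex.I * (s * Real.cos (x + φ)) - Complex.I * m * ((x + φ : ℝ) : ℂ)) := by
    rw [← intervalIntegral.integral_const_mul]
    congr 1
    funext x
    rw [← Complex.exp_add]
    congr 1
    push_cast
    ring
  rw [step1]
  have step2 : (∫ x in (0:ℝ)..(2 * Real.pi),
      Complex.exp (Complex.I * (s * Real.cos (x + φ)) - Complex.I * m * ((x + φ : ℝ) : ℂ)))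
      = ∫ x in (0:ℝ)..(2 * Real.pi),
        Complex.exp (Complex.I * (s * Real.cos x) - Complex.I * m * ((x:ℝ):ℂ)) := by
    rw [intervalIntegral.integral_comp_add_right
      (fun x : ℝ => Complex.exp (Complex.I * (s * Real.cos x) - Complex.I * m * ((x:ℝ):ℂ))) φ]
    rw [zero_add]
    have := hper.intervalIntegral_add_eq φ 0
    rw [zero_add] at this
    rw [show (2 * Real.pi + φ) = φ + 2 * Real.pi by ring]
    exact this
  rw [step2]
  ring

lemma intervalIntegral_conj {f : ℝ → ℂ} {a b : ℝ} :
    ∫ x in a..b, conj (f x) = conj (∫ x in a..b, f x) := by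
  rw [intervalIntegral, intervalIntegral, integral_conj, integral_conj, map_sub]

lemma cc_neg_arg (s : ℝ) (m : ℤ) :
    cc (-s) 0 m = Complex.exp (Complex.I * m * Real.pi) * cc s 0 m := by
  have h : cc (-s) 0 m = cc s Real.pi m := by
    rw [cc, cc]
    congr 2
    rw [show ((Real.pi : ℝ) : ℂ) = (Real.pi : ℂ) from rfl]
    rw [show Complex.I * (Real.pi:ℂ) = (Real.pi:ℂ) * Complex.I by ring, Complex.exp_pi_mul_I]
    rw [show ((0:ℝ):ℂ) = 0 from rfl]
    push_cast
    simp [Complex.exp_zero]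
    ring
  rw [h, cc_shift]

lemma cc_even (s : ℝ) (m : ℤ) : cc s 0 (-m) = cc s 0 m := by
  rw [cc_eq, cc_eq]
  simp only [add_zero]
  congr 1
  have key : ∀ x : ℝ, Complex.exp (Complex.I * ((s:ℂ) * (Real.cos x:ℂ)) - Complex.I * ((-m : ℤ):ℂ) * (x:ℂ))
      = (fun y : ℝ => Complex.exp (Complex.I * (s * Real.cos y) - Complex.I * m * ((y:ℝ):ℂ)))
        (2*Real.pi - x) := by
    intro x
    simp only
    rw [Real.cos_two_pi_sub]
    rw [show Complex.I * ((s:ℂ) * (Real.cos x:ℂ)) - Complex.I * (m:ℂ) * ((2*Real.pi - x : ℝ):ℂ)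
        = (Complex.I * ((s:ℂ) * (Real.cos x:ℂ)) - Complex.I * ((-m : ℤ):ℂ) * (x:ℂ))
          + ((-m : ℤ):ℂ) * (2*(Real.pi:ℂ)*Complex.I) by push_cast; ring]
    rw [Complex.exp_add, Complex.exp_int_mul_two_pi_mul_I, mul_one]
  simp_rw [key]
  rw [intervalIntegral.integral_comp_sub_left
    (fun y : ℝ => Complex.exp (Complex.I * (s * Real.cos y) - Complex.I * m * ((y:ℝ):ℂ))) (2*Real.pi)]
  norm_num

lemma cc_conj (s : ℝ) (m : ℤ) : conj (cc s 0 m) = cc (-s) 0 (-m) := by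
  rw [cc_eq, cc_eq]
  rw [map_mul, ← intervalIntegral_conj]
  congr 1
  · simp [map_ofNat, Complex.conj_ofReal]
  · congr 1
    funext x
    rw [← Complex.exp_conj]
    congr 1
    simp only [map_sub, map_mul, Complex.conj_I, Complex.conj_ofReal, map_intCast]
    push_cast
    ring

lemma besselJ_cc (m : ℤ) (r : ℝ) :
    ((besselJ m r : ℝ) : ℂ) = Complex.exp (-(Complex.I * m * Real.pi) / 2) * cc r 0 m := by
  set w : ℂ := Complex.exp (-(Complex.I * m * Real.pi) / 2) * cc r 0 m with hw
  have hz : ((2 * Real.pi : ℂ)⁻¹ * ∫ θ in (0:ℝ)..(2 * Real.pi),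
      Complex.exp (Complex.I * ((r * Real.cos θ - (m : ℝ) * (θ + Real.pi / 2) : ℝ) : ℂ))) = w := by
    have h1 : ∀ θ : ℝ, Complex.exp (Complex.I * ((r * Real.cos θ - (m : ℝ) * (θ + Real.pi / 2) : ℝ) : ℂ))
        = Complex.exp (-(Complex.I * m * Real.pi) / 2) *
          Complex.exp (Complex.I * ((r:ℂ) * ((Real.cos (θ + 0) : ℝ) : ℂ)) - Complex.I * (m:ℂ) * (θ:ℂ)) := by
      intro θ
      rw [← Complex.exp_add]
      congr 1
      rw [show Real.cos (θ + 0) = Real.cos θ by rw [add_zero]]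
      push_cast
      ring
    simp_rw [h1]
    rw [intervalIntegral.integral_const_mul, hw, cc_eq]
    ring
  have hconj : conj w = w := by
    rw [hw, map_mul, cc_conj, cc_even, cc_neg_arg, ← Complex.exp_conj]
    have hc : conj (-(Complex.I * (m:ℂ) * (Real.pi:ℂ)) / 2) = Complex.I * m * Real.pi / 2 := by
      simp only [map_div₀, map_neg, map_mul, Complex.conj_I, Complex.conj_ofReal, map_intCast,
        map_ofNat]
      ring
    rw [hc, ← mul_assoc, ← Complex.exp_add]
    congr 1
    rw [show Complex.I * (m:ℂ) * (Real.pi:ℂ) / 2 + Complex.I * (m:ℂ) * (Real.pi:ℂ)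
        = -(Complex.I * (m:ℂ) * (Real.pi:ℂ)) / 2 + (m : ℂ) * (2 * (Real.pi:ℂ) * Complex.I) by ring]
    rw [Complex.exp_add]
    rw [show ((m:ℂ)) * (2 * (Real.pi:ℂ) * Complex.I) = ((m:ℤ):ℂ) * (2 * (Real.pi:ℂ) * Complex.I) by norm_num]
    rw [Complex.exp_int_mul_two_pi_mul_I, mul_one]
  rw [besselJ, hz]
  exact Complex.conj_eq_iff_re.mp hconj

lemma conv_hasSum (F G : C(AddCircle (2 * Real.pi), ℂ)) (n : ℤ) :
    HasSum (fun k : ℤ => fourierCoeff (F : AddCircle (2 * Real.pi) → ℂ) k *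
      fourierCoeff (G : AddCircle (2 * Real.pi) → ℂ) (n - k))
      (fourierCoeff (fun x : AddCircle (2 * Real.pi) => F x * G x) n) := by
  classical
  set H : C(AddCircle (2 * Real.pi), ℂ) :=
    ⟨fun x => conj (F x) * fourier n x,
      (Complex.continuous_conj.comp F.continuous).mul (map_continuous (fourier n))⟩ with hH
  have hcoeffH : ∀ k : ℤ, fourierCoeff (H : AddCircle (2 * Real.pi) → ℂ) k
      = conj (fourierCoeff (F : AddCircle (2 * Real.pi) → ℂ) (n - k)) := by
    intro k
    rw [fourierCoeff, fourierCoeff, ← integral_conj]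
    apply integral_congr_ae
    apply Filter.Eventually.of_forall
    intro t
    simp only [smul_eq_mul, hH, ContinuousMap.coe_mk]
    rw [show conj ((fourier (-(n - k)) t : ℂ) * F t)
        = conj ((fourier (-(n-k)) t : ℂ)) * conj (F t) from map_mul _ _ _]
    rw [← fourier_neg, neg_neg]
    rw [show ((n : ℤ) - k) = -k + n by ring, fourier_add]
    push_cast
    ring
  set x : Lp ℂ 2 (@haarAddCircle (2*Real.pi) _) := ContinuousMap.toLp 2 haarAddCircle ℂ H with hx
  set y : Lp ℂ 2 (@haarAddCircle (2*Real.pi) _) := ContinuousMap.toLp 2 haarAddCircle ℂ G with hy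
  have key := (fourierBasis (T := 2*Real.pi)).hasSum_inner_mul_inner x y
  have h1 : ∀ k : ℤ, (inner ℂ x (fourierBasis (T := 2*Real.pi) k) : ℂ) *
      inner ℂ ((fourierBasis (T := 2*Real.pi)) k) y
      = fourierCoeff (F : AddCircle (2 * Real.pi) → ℂ) (n - k) *
        fourierCoeff (G : AddCircle (2 * Real.pi) → ℂ) k := by
    intro k
    have hby : (inner ℂ ((fourierBasis (T := 2*Real.pi)) k) y : ℂ)
        = fourierCoeff (G : AddCircle (2 * Real.pi) → ℂ) k := by
      rw [← HilbertBasis.repr_apply_apply, fourierBasis_repr, hy, fourierCoeff_toLp]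
    have hbx : (inner ℂ x ((fourierBasis (T := 2*Real.pi)) k) : ℂ)
        = fourierCoeff (F : AddCircle (2 * Real.pi) → ℂ) (n - k) := by
      rw [← inner_conj_symm, ← HilbertBasis.repr_apply_apply, fourierBasis_repr, hx,
        fourierCoeff_toLp, hcoeffH k]
      simp
    rw [hbx, hby]
  have hinner : (inner ℂ x y : ℂ)
      = fourierCoeff (fun t : AddCircle (2*Real.pi) => F t * G t) n := by
    rw [MeasureTheory.L2.inner_def, fourierCoeff]
    apply integral_congr_ae
    filter_upwards [ContinuousMap.coeFn_toLp (p := 2) (𝕜 := ℂ) haarAddCircle H,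
      ContinuousMap.coeFn_toLp (p := 2) (𝕜 := ℂ) haarAddCircle G] with t h1t h2t
    rw [RCLike.inner_apply, h1t, h2t]
    simp only [hH, ContinuousMap.coe_mk, smul_eq_mul]
    rw [map_mul]
    rw [show conj (conj (F t)) = F t from Complex.conj_conj _, ← fourier_neg]
    ring
  rw [hinner] at key
  simp_rw [h1] at key
  have key2 := (Equiv.subLeft n).hasSum_iff.mpr key
  have : (fun k : ℤ => fourierCoeff (F : AddCircle (2 * Real.pi) → ℂ) k *
      fourierCoeff (G : AddCircle (2 * Real.pi) → ℂ) (n - k))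
      = (fun k : ℤ => fourierCoeff (F : AddCircle (2 * Real.pi) → ℂ) (n - k) *
        fourierCoeff (G : AddCircle (2 * Real.pi) → ℂ) k) ∘ (Equiv.subLeft n) := by
    funext k
    simp [Equiv.subLeft, sub_sub_cancel]
  rw [this]
  exact key2

lemma cont_integrable (f : AddCircle (2 * Real.pi) → ℂ) (hf : Continuous f) :
    Integrable f haarAddCircle :=
  hf.integrable_of_hasCompactSupport (isClosed_tsupport _).isCompact

lemma fourierCoeff_add' (f g : AddCircle (2 * Real.pi) → ℂ) (hf : Continuous f)
    (hg : Continuous g) (k : ℤ) :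
    fourierCoeff (fun x => f x + g x) k = fourierCoeff f k + fourierCoeff g k := by
  rw [fourierCoeff, fourierCoeff, fourierCoeff, ← integral_add]
  · apply integral_congr_ae
    apply Filter.Eventually.of_forall
    intro t
    simp [smul_eq_mul, mul_add]
  · exact cont_integrable _ ((map_continuous (fourier (-k))).smul hf)
  · exact cont_integrable _ ((map_continuous (fourier (-k))).smul hg)

/-- averaged function with only Fourier modes divisible by 3 -/
def Gf (s φ : ℝ) : C(AddCircle (2 * Real.pi), ℂ) :=
  ⟨fun x => (1/3 : ℂ) * (expC ((Complex.I * s / 2) * Complex.exp (Complex.I * φ)) x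
      + (expC ((Complex.I * s / 2) * Complex.exp (Complex.I * ((φ + 2*Real.pi/3 : ℝ) : ℂ))) x
      + expC ((Complex.I * s / 2) * Complex.exp (Complex.I * ((φ + 4*Real.pi/3 : ℝ) : ℂ))) x)),
    by
      apply continuous_const.mul
      exact (expC_continuous _).add ((expC_continuous _).add (expC_continuous _))⟩

def tau (k : ℤ) : ℂ :=
  1 + Complex.exp (Complex.I * k * ((2*Real.pi/3 : ℝ) : ℂ))
    + Complex.exp (Complex.I * k * ((4*Real.pi/3 : ℝ) : ℂ))

lemma Gf_coeff (s φ : ℝ) (k : ℤ) :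
    fourierCoeff (Gf s φ : AddCircle (2 * Real.pi) → ℂ) k
      = (1/3) * tau k * (Complex.exp (Complex.I * k * φ) * cc s 0 k) := by
  have hcoe : (Gf s φ : AddCircle (2 * Real.pi) → ℂ)
      = fun x => (1/3 : ℂ) * (expC ((Complex.I * s / 2) * Complex.exp (Complex.I * φ)) x
      + (expC ((Complex.I * s / 2) * Complex.exp (Complex.I * ((φ + 2*Real.pi/3 : ℝ) : ℂ))) x
      + expC ((Complex.I * s / 2) * Complex.exp (Complex.I * ((φ + 4*Real.pi/3 : ℝ) : ℂ))) x)) := rfl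
  rw [hcoe, fourierCoeff.const_mul, fourierCoeff_add' _ (fun x => expC _ x + expC _ x) (expC_continuous _)
    ((expC_continuous _).add (expC_continuous _)), fourierCoeff_add' _ _ (expC_continuous _)
    (expC_continuous _)]
  have h0 : fourierCoeff (expC ((Complex.I * s / 2) * Complex.exp (Complex.I * φ))) k
      = cc s φ k := rfl
  have h1 : fourierCoeff (expC ((Complex.I * s / 2) *
      Complex.exp (Complex.I * ((φ + 2*Real.pi/3 : ℝ) : ℂ)))) k = cc s (φ + 2*Real.pi/3) k := rfl
  have h2 : fourierCoeff (expC ((Complex.I * s / 2) *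
      Complex.exp (Complex.I * ((φ + 4*Real.pi/3 : ℝ) : ℂ)))) k = cc s (φ + 4*Real.pi/3) k := rfl
  rw [h0, h1, h2, cc_shift s φ, cc_shift s (φ + 2*Real.pi/3), cc_shift s (φ + 4*Real.pi/3)]
  have e1 : Complex.exp (Complex.I * k * ((φ + 2*Real.pi/3 : ℝ) : ℂ))
      = Complex.exp (Complex.I * k * ((2*Real.pi/3 : ℝ) : ℂ)) * Complex.exp (Complex.I * k * φ) := by
    rw [← Complex.exp_add]; congr 1; push_cast; ring
  have e2 : Complex.exp (Complex.I * k * ((φ + 4*Real.pi/3 : ℝ) : ℂ))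
      = Complex.exp (Complex.I * k * ((4*Real.pi/3 : ℝ) : ℂ)) * Complex.exp (Complex.I * k * φ) := by
    rw [← Complex.exp_add]; congr 1; push_cast; ring
  rw [e1, e2, tau]
  ring

lemma tau_mul_three (i : ℤ) : tau (3 * i) = 3 := by
  rw [tau]
  rw [show Complex.I * ((3 * i : ℤ) : ℂ) * ((2*Real.pi/3 : ℝ) : ℂ)
      = (i : ℂ) * (2 * (Real.pi : ℂ) * Complex.I) by push_cast; ring]
  rw [show Complex.I * ((3 * i : ℤ) : ℂ) * ((4*Real.pi/3 : ℝ) : ℂ)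
      = ((2 * i : ℤ) : ℂ) * (2 * (Real.pi : ℂ) * Complex.I) by push_cast; ring]
  rw [show (i : ℂ) * (2 * (Real.pi : ℂ) * Complex.I)
      = ((i : ℤ) : ℂ) * (2 * (Real.pi : ℂ) * Complex.I) by norm_num]
  rw [Complex.exp_int_mul_two_pi_mul_I, Complex.exp_int_mul_two_pi_mul_I]
  norm_num

lemma tau_not_dvd (k : ℤ) (h : ¬ (3 ∣ k)) : tau k = 0 := by
  set ζ : ℂ := Complex.exp (Complex.I * k * ((2*Real.pi/3 : ℝ) : ℂ)) with hζ
  have hζ3 : ζ ^ 3 = 1 := by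
    rw [hζ, ← Complex.exp_nat_mul]
    rw [show (3 : ℕ) * (Complex.I * k * ((2*Real.pi/3 : ℝ) : ℂ))
        = (k : ℂ) * (2 * (Real.pi : ℂ) * Complex.I) by push_cast; ring]
    rw [show (k : ℂ) * (2 * (Real.pi : ℂ) * Complex.I)
        = ((k : ℤ) : ℂ) * (2 * (Real.pi : ℂ) * Complex.I) by norm_num]
    exact Complex.exp_int_mul_two_pi_mul_I k
  have hζ2 : Complex.exp (Complex.I * k * ((4*Real.pi/3 : ℝ) : ℂ)) = ζ ^ 2 := by
    rw [hζ, ← Complex.exp_nat_mul]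
    congr 1
    push_cast
    ring
  have hζne : ζ ≠ 1 := by
    intro hone
    rw [hζ] at hone
    obtain ⟨m, hm⟩ := Complex.exp_eq_one_iff.mp hone
    have hne : (2 * (Real.pi : ℂ) * Complex.I) ≠ 0 := by
      simp [Real.pi_ne_zero, Complex.I_ne_zero]
    have h3 : (k : ℂ) * (2 * (Real.pi : ℂ) * Complex.I)
        = ((3 * m : ℤ) : ℂ) * (2 * (Real.pi : ℂ) * Complex.I) := by
      push_cast at hm ⊢
      linear_combination 3 * hm
    have h4 : (k : ℂ) = ((3 * m : ℤ) : ℂ) := mul_right_cancel₀ hne h3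
    have h5 : k = 3 * m := by exact_mod_cast h4
    exact h ⟨m, h5⟩
  have hfac : (ζ - 1) * (1 + ζ + ζ ^ 2) = 0 := by
    linear_combination hζ3
  rcases mul_eq_zero.mp hfac with h1 | h2
  · exact absurd (sub_eq_zero.mp h1) hζne
  · rw [tau, hζ2]
    exact h2

lemma expC_mul (z w : ℂ) (x : AddCircle (2 * Real.pi)) :
    expC z x * expC w x = expC (z + w) x := by
  rw [expC, expC, expC, ← Complex.exp_add, map_add]
  congr 1
  ring

lemma pair_arg (s α β : ℝ) :
    (Complex.I * s / 2) * Complex.exp (Complex.I * α) + (Complex.I * s / 2) * Complex.exp (Complex.I * β)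
      = (Complex.I * ((2*s*Real.cos ((α-β)/2) : ℝ) : ℂ) / 2)
        * Complex.exp (Complex.I * (((α+β)/2 : ℝ) : ℂ)) := by
  have e1 : Complex.exp (Complex.I * (α : ℂ))
      = Complex.exp (Complex.I * (((α+β)/2 : ℝ) : ℂ)) *
        Complex.exp (Complex.I * (((α-β)/2 : ℝ) : ℂ)) := by
    rw [← Complex.exp_add]; congr 1; push_cast; ring
  have e2 : Complex.exp (Complex.I * (β : ℂ))
      = Complex.exp (Complex.I * (((α+β)/2 : ℝ) : ℂ)) *
        Complex.exp (-(Complex.I * (((α-β)/2 : ℝ) : ℂ))) := by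
    rw [← Complex.exp_add]; congr 1; push_cast; ring
  have key : 2 * ((Real.cos ((α-β)/2) : ℝ) : ℂ)
      = Complex.exp (Complex.I * (((α-β)/2 : ℝ) : ℂ))
        + Complex.exp (-(Complex.I * (((α-β)/2 : ℝ) : ℂ))) := by
    rw [Complex.ofReal_cos]
    have h2c := Complex.two_cos ((((α-β)/2 : ℝ)) : ℂ)
    rw [h2c]
    congr 2
    · ring
    · ring
  rw [e1, e2]
  rw [show ((2*s*Real.cos ((α-β)/2) : ℝ) : ℂ)
      = (s : ℂ) * (2 * ((Real.cos ((α-β)/2) : ℝ) : ℂ)) by push_cast; ring]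
  rw [key]
  ring

def ccTerm (s : ℝ) (m : ℤ) (α β : ℝ) : ℂ :=
  Complex.exp (Complex.I * m * (((α+β)/2 : ℝ) : ℂ)) * cc (2*s*Real.cos ((α-β)/2)) 0 m

lemma fourierCoeff_expC_pair (s α β : ℝ) (m : ℤ) :
    fourierCoeff (expC ((Complex.I * s / 2) * Complex.exp (Complex.I * α)
      + (Complex.I * s / 2) * Complex.exp (Complex.I * β))) m = ccTerm s m α β := by
  rw [pair_arg]
  have : fourierCoeff (expC ((Complex.I * ((2*s*Real.cos ((α-β)/2) : ℝ) : ℂ) / 2)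
      * Complex.exp (Complex.I * (((α+β)/2 : ℝ) : ℂ)))) m
      = cc (2*s*Real.cos ((α-β)/2)) ((α+β)/2) m := rfl
  rw [this, cc_shift, ccTerm]

lemma fourierCoeff_sum9 (z : Fin 9 → ℂ) (m : ℤ) :
    fourierCoeff (fun x : AddCircle (2 * Real.pi) => ∑ i : Fin 9, expC (z i) x) m
      = ∑ i : Fin 9, fourierCoeff (expC (z i)) m := by
  rw [fourierCoeff]
  have hsmul : ∀ t : AddCircle (2 * Real.pi), (fourier (-m) t : ℂ) • (∑ i : Fin 9, expC (z i) t)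
      = ∑ i : Fin 9, (fourier (-m) t : ℂ) • expC (z i) t := by
    intro t
    exact Finset.smul_sum
  simp_rw [hsmul]
  rw [integral_finset_sum]
  · rfl
  · intro i _
    exact cont_integrable _ ((map_continuous (fourier (-m))).smul (expC_continuous _))

lemma Gf_prod_coeff (s φ₁ φ₂ : ℝ) (m : ℤ) :
    fourierCoeff (fun x : AddCircle (2 * Real.pi) => Gf s φ₁ x * Gf s φ₂ x) m
      = (1/9) * (ccTerm s m φ₁ φ₂ + ccTerm s m φ₁ (φ₂ + 2*Real.pi/3)
        + ccTerm s m φ₁ (φ₂ + 4*Real.pi/3)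
        + ccTerm s m (φ₁ + 2*Real.pi/3) φ₂ + ccTerm s m (φ₁ + 2*Real.pi/3) (φ₂ + 2*Real.pi/3)
        + ccTerm s m (φ₁ + 2*Real.pi/3) (φ₂ + 4*Real.pi/3)
        + ccTerm s m (φ₁ + 4*Real.pi/3) φ₂ + ccTerm s m (φ₁ + 4*Real.pi/3) (φ₂ + 2*Real.pi/3)
        + ccTerm s m (φ₁ + 4*Real.pi/3) (φ₂ + 4*Real.pi/3)) := by
  set a1 : ℂ := (Complex.I * s / 2) * Complex.exp (Complex.I * φ₁) with ha1
  set a2 : ℂ := (Complex.I * s / 2) * Complex.exp (Complex.I * ((φ₁ + 2*Real.pi/3 : ℝ) : ℂ)) with ha2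
  set a3 : ℂ := (Complex.I * s / 2) * Complex.exp (Complex.I * ((φ₁ + 4*Real.pi/3 : ℝ) : ℂ)) with ha3
  set b1 : ℂ := (Complex.I * s / 2) * Complex.exp (Complex.I * φ₂) with hb1
  set b2 : ℂ := (Complex.I * s / 2) * Complex.exp (Complex.I * ((φ₂ + 2*Real.pi/3 : ℝ) : ℂ)) with hb2
  set b3 : ℂ := (Complex.I * s / 2) * Complex.exp (Complex.I * ((φ₂ + 4*Real.pi/3 : ℝ) : ℂ)) with hb3
  set zv : Fin 9 → ℂ := ![a1+b1, a1+b2, a1+b3, a2+b1, a2+b2, a2+b3, a3+b1, a3+b2, a3+b3] with hzv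
  have mul9 : (fun x : AddCircle (2 * Real.pi) => Gf s φ₁ x * Gf s φ₂ x)
      = fun x => (1/9 : ℂ) * ∑ i : Fin 9, expC (zv i) x := by
    funext x
    simp only [Gf, ContinuousMap.coe_mk, hzv, Fin.sum_univ_succ, Fin.sum_univ_zero,
      Matrix.cons_val_zero, Matrix.cons_val_succ]
    simp only [← expC_mul]
    ring
  rw [mul9, fourierCoeff.const_mul, fourierCoeff_sum9]
  simp only [hzv, Fin.sum_univ_succ, Fin.sum_univ_zero,
    Matrix.cons_val_zero, Matrix.cons_val_succ]
  rw [ha1, ha2, ha3, hb1, hb2, hb3]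
  simp only [fourierCoeff_expC_pair]
  ring

lemma phase_eval (n : ℤ) (p c : ℝ) (j : ℤ) (h : 3 * p = c + j * (2*Real.pi)) :
    Complex.exp (Complex.I * ((3*n : ℤ) : ℂ) * (p : ℂ))
      = Complex.exp (Complex.I * (n : ℂ) * (c : ℂ)) := by
  have hC : (3:ℂ) * (p:ℂ) = (c:ℂ) + (j:ℂ) * (2*(Real.pi:ℂ)) := by exact_mod_cast h
  have harg : Complex.I * ((3*n : ℤ) : ℂ) * (p : ℂ)
      = Complex.I * (n:ℂ) * (c:ℂ) + ((n*j : ℤ):ℂ) * (2*(Real.pi:ℂ)*Complex.I) := by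
    push_cast
    linear_combination (Complex.I * (n:ℂ)) * hC
  rw [harg, Complex.exp_add, Complex.exp_int_mul_two_pi_mul_I, mul_one]

lemma ccTerm_eval_pos (s α β cq c : ℝ) (n j : ℤ)
    (hq : Real.cos ((α - β)/2) = cq)
    (hp : 3 * ((α + β)/2) = c + j * (2*Real.pi)) :
    ccTerm s (3*n) α β
      = Complex.exp (Complex.I * (n:ℂ) * (c:ℂ)) * cc (2*s*cq) 0 (3*n) := by
  rw [ccTerm, hq, phase_eval n _ c j hp]

lemma ccTerm_eval_neg (s α β cq c : ℝ) (n j : ℤ)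
    (hq : Real.cos ((α - β)/2) = -cq)
    (hp : 3 * ((α + β)/2) + 3*Real.pi = c + j * (2*Real.pi)) :
    ccTerm s (3*n) α β
      = Complex.exp (Complex.I * (n:ℂ) * (c:ℂ)) * cc (2*s*cq) 0 (3*n) := by
  rw [ccTerm, hq]
  rw [show 2*s*(-cq) = -(2*s*cq) by ring, cc_neg_arg]
  rw [← mul_assoc, ← Complex.exp_add]
  have hC : (3:ℂ) * (((α + β)/2 : ℝ) : ℂ) + 3*(Real.pi:ℂ)
      = (c:ℂ) + (j:ℂ) * (2*(Real.pi:ℂ)) := by exact_mod_cast hp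
  have harg : Complex.I * ((3*n : ℤ) : ℂ) * (((α + β)/2 : ℝ) : ℂ)
        + Complex.I * ((3*n : ℤ) : ℂ) * ((Real.pi : ℝ) : ℂ)
      = Complex.I * (n:ℂ) * (c:ℂ) + ((n*j : ℤ):ℂ) * (2*(Real.pi:ℂ)*Complex.I) := by
    push_cast at hC ⊢
    linear_combination (Complex.I * (n:ℂ)) * hC
  rw [show ((Real.pi : ℝ) : ℂ) = (Real.pi : ℂ) from rfl] at harg
  rw [harg, Complex.exp_add, Complex.exp_int_mul_two_pi_mul_I, mul_one]

lemma P0eval (s : ℝ) (n : ℤ) :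
    fourierCoeff (fun x : AddCircle (2 * Real.pi) => Gf s 0 x * Gf s 0 x) (3*n)
      = (1/3) * cc (2*s) 0 (3*n)
        + (2/3) * Complex.exp (Complex.I * (n:ℂ) * ((Real.pi : ℝ) : ℂ)) * cc s 0 (3*n) := by
  rw [Gf_prod_coeff]
  rw [ccTerm_eval_pos s 0 0 1 0 n 0
    (by norm_num) (by ring)]
  rw [ccTerm_eval_pos s 0 (0 + 2*Real.pi/3) (1/2) Real.pi n 0
    (by rw [show ((0:ℝ) - (0 + 2*Real.pi/3))/2 = -(Real.pi/3) by ring, Real.cos_neg,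
      Real.cos_pi_div_three]) (by ring)]
  rw [ccTerm_eval_neg s 0 (0 + 4*Real.pi/3) (1/2) Real.pi n 2
    (by rw [show ((0:ℝ) - (0 + 4*Real.pi/3))/2 = -(2*Real.pi/3) by ring, Real.cos_neg,
      show (2*Real.pi/3 : ℝ) = Real.pi - Real.pi/3 by ring, Real.cos_pi_sub,
      Real.cos_pi_div_three]) (by ring)]
  rw [ccTerm_eval_pos s (0 + 2*Real.pi/3) 0 (1/2) Real.pi n 0
    (by rw [show ((0 + 2*Real.pi/3 : ℝ) - 0)/2 = Real.pi/3 by ring, Real.cos_pi_div_three])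
    (by ring)]
  rw [ccTerm_eval_pos s (0 + 2*Real.pi/3) (0 + 2*Real.pi/3) 1 0 n 1
    (by norm_num) (by ring)]
  rw [ccTerm_eval_pos s (0 + 2*Real.pi/3) (0 + 4*Real.pi/3) (1/2) Real.pi n 1
    (by rw [show ((0 + 2*Real.pi/3 : ℝ) - (0 + 4*Real.pi/3))/2 = -(Real.pi/3) by ring,
      Real.cos_neg, Real.cos_pi_div_three]) (by ring)]
  rw [ccTerm_eval_neg s (0 + 4*Real.pi/3) 0 (1/2) Real.pi n 2
    (by rw [show ((0 + 4*Real.pi/3 : ℝ) - 0)/2 = 2*Real.pi/3 by ring,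
      show (2*Real.pi/3 : ℝ) = Real.pi - Real.pi/3 by ring, Real.cos_pi_sub,
      Real.cos_pi_div_three]) (by ring)]
  rw [ccTerm_eval_pos s (0 + 4*Real.pi/3) (0 + 2*Real.pi/3) (1/2) Real.pi n 1
    (by rw [show ((0 + 4*Real.pi/3 : ℝ) - (0 + 2*Real.pi/3))/2 = Real.pi/3 by ring,
      Real.cos_pi_div_three]) (by ring)]
  rw [ccTerm_eval_pos s (0 + 4*Real.pi/3) (0 + 4*Real.pi/3) 1 0 n 2
    (by norm_num) (by ring)]
  simp only [Complex.ofReal_zero, mul_zero, Complex.exp_zero, one_mul]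
  rw [show (2*s*(1:ℝ)) = 2*s by ring, show (2*s*(1/2 : ℝ)) = s by ring]
  ring

lemma Ppluseval (s : ℝ) (n : ℤ) :
    fourierCoeff (fun x : AddCircle (2 * Real.pi) =>
        Gf s (Real.pi/6) x * Gf s 0 x) (3*n)
      = (1/3) * (Complex.exp (Complex.I * (n:ℂ) * ((Real.pi/4 : ℝ) : ℂ))
            * cc (2*s*Real.cos (Real.pi/12)) 0 (3*n)
          + Complex.exp (Complex.I * (n:ℂ) * ((5*Real.pi/4 : ℝ) : ℂ))
            * cc (2*s*Real.cos (5*Real.pi/12)) 0 (3*n)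
          + Complex.exp (Complex.I * (n:ℂ) * ((5*Real.pi/4 : ℝ) : ℂ))
            * cc (2*s*Real.cos (Real.pi/4)) 0 (3*n)) := by
  rw [Gf_prod_coeff]
  rw [ccTerm_eval_pos s (Real.pi/6) 0 (Real.cos (Real.pi/12)) (Real.pi/4) n 0
    (by rw [show ((Real.pi/6 : ℝ) - 0)/2 = Real.pi/12 by ring]) (by ring)]
  rw [ccTerm_eval_pos s (Real.pi/6) (0 + 2*Real.pi/3) (Real.cos (Real.pi/4)) (5*Real.pi/4) n 0
    (by rw [show ((Real.pi/6 : ℝ) - (0 + 2*Real.pi/3))/2 = -(Real.pi/4) by ring, Real.cos_neg])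
    (by ring)]
  rw [ccTerm_eval_neg s (Real.pi/6) (0 + 4*Real.pi/3) (Real.cos (5*Real.pi/12)) (5*Real.pi/4) n 2
    (by rw [show ((Real.pi/6 : ℝ) - (0 + 4*Real.pi/3))/2 = -(7*Real.pi/12) by ring, Real.cos_neg,
      show (7*Real.pi/12 : ℝ) = Real.pi - 5*Real.pi/12 by ring, Real.cos_pi_sub])
    (by ring)]
  rw [ccTerm_eval_pos s (Real.pi/6 + 2*Real.pi/3) 0 (Real.cos (5*Real.pi/12)) (5*Real.pi/4) n 0
    (by rw [show ((Real.pi/6 + 2*Real.pi/3 : ℝ) - 0)/2 = 5*Real.pi/12 by ring]) (by ring)]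
  rw [ccTerm_eval_pos s (Real.pi/6 + 2*Real.pi/3) (0 + 2*Real.pi/3) (Real.cos (Real.pi/12))
      (Real.pi/4) n 1
    (by rw [show ((Real.pi/6 + 2*Real.pi/3 : ℝ) - (0 + 2*Real.pi/3))/2 = Real.pi/12 by ring])
    (by ring)]
  rw [ccTerm_eval_pos s (Real.pi/6 + 2*Real.pi/3) (0 + 4*Real.pi/3) (Real.cos (Real.pi/4))
      (5*Real.pi/4) n 1
    (by rw [show ((Real.pi/6 + 2*Real.pi/3 : ℝ) - (0 + 4*Real.pi/3))/2 = -(Real.pi/4) by ring,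
      Real.cos_neg]) (by ring)]
  rw [ccTerm_eval_neg s (Real.pi/6 + 4*Real.pi/3) 0 (Real.cos (Real.pi/4)) (5*Real.pi/4) n 2
    (by rw [show ((Real.pi/6 + 4*Real.pi/3 : ℝ) - 0)/2 = 3*Real.pi/4 by ring,
      show (3*Real.pi/4 : ℝ) = Real.pi - Real.pi/4 by ring, Real.cos_pi_sub]) (by ring)]
  rw [ccTerm_eval_pos s (Real.pi/6 + 4*Real.pi/3) (0 + 2*Real.pi/3) (Real.cos (5*Real.pi/12))
      (5*Real.pi/4) n 1
    (by rw [show ((Real.pi/6 + 4*Real.pi/3 : ℝ) - (0 + 2*Real.pi/3))/2 = 5*Real.pi/12 by ring])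
    (by ring)]
  rw [ccTerm_eval_pos s (Real.pi/6 + 4*Real.pi/3) (0 + 4*Real.pi/3) (Real.cos (Real.pi/12))
      (Real.pi/4) n 2
    (by rw [show ((Real.pi/6 + 4*Real.pi/3 : ℝ) - (0 + 4*Real.pi/3))/2 = Real.pi/12 by ring])
    (by ring)]
  ring

lemma Pminuseval (s : ℝ) (n : ℤ) :
    fourierCoeff (fun x : AddCircle (2 * Real.pi) =>
        Gf s (-(Real.pi/6)) x * Gf s 0 x) (3*n)
      = (1/3) * (Complex.exp (Complex.I * (n:ℂ) * ((-(Real.pi/4) : ℝ) : ℂ))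
            * cc (2*s*Real.cos (Real.pi/12)) 0 (3*n)
          + Complex.exp (Complex.I * (n:ℂ) * ((3*Real.pi/4 : ℝ) : ℂ))
            * cc (2*s*Real.cos (5*Real.pi/12)) 0 (3*n)
          + Complex.exp (Complex.I * (n:ℂ) * ((3*Real.pi/4 : ℝ) : ℂ))
            * cc (2*s*Real.cos (Real.pi/4)) 0 (3*n)) := by
  rw [Gf_prod_coeff]
  rw [ccTerm_eval_pos s (-(Real.pi/6)) 0 (Real.cos (Real.pi/12)) (-(Real.pi/4)) n 0
    (by rw [show ((-(Real.pi/6) : ℝ) - 0)/2 = -(Real.pi/12) by ring, Real.cos_neg]) (by ring)]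
  rw [ccTerm_eval_pos s (-(Real.pi/6)) (0 + 2*Real.pi/3) (Real.cos (5*Real.pi/12))
      (3*Real.pi/4) n 0
    (by rw [show ((-(Real.pi/6) : ℝ) - (0 + 2*Real.pi/3))/2 = -(5*Real.pi/12) by ring,
      Real.cos_neg]) (by ring)]
  rw [ccTerm_eval_neg s (-(Real.pi/6)) (0 + 4*Real.pi/3) (Real.cos (Real.pi/4))
      (3*Real.pi/4) n 2
    (by rw [show ((-(Real.pi/6) : ℝ) - (0 + 4*Real.pi/3))/2 = -(3*Real.pi/4) by ring,
      Real.cos_neg, show (3*Real.pi/4 : ℝ) = Real.pi - Real.pi/4 by ring, Real.cos_pi_sub])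
    (by ring)]
  rw [ccTerm_eval_pos s (-(Real.pi/6) + 2*Real.pi/3) 0 (Real.cos (Real.pi/4))
      (3*Real.pi/4) n 0
    (by rw [show ((-(Real.pi/6) + 2*Real.pi/3 : ℝ) - 0)/2 = Real.pi/4 by ring]) (by ring)]
  rw [ccTerm_eval_pos s (-(Real.pi/6) + 2*Real.pi/3) (0 + 2*Real.pi/3) (Real.cos (Real.pi/12))
      (-(Real.pi/4)) n 1
    (by rw [show ((-(Real.pi/6) + 2*Real.pi/3 : ℝ) - (0 + 2*Real.pi/3))/2 = -(Real.pi/12) by ring,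
      Real.cos_neg]) (by ring)]
  rw [ccTerm_eval_pos s (-(Real.pi/6) + 2*Real.pi/3) (0 + 4*Real.pi/3) (Real.cos (5*Real.pi/12))
      (3*Real.pi/4) n 1
    (by rw [show ((-(Real.pi/6) + 2*Real.pi/3 : ℝ) - (0 + 4*Real.pi/3))/2 = -(5*Real.pi/12) by ring,
      Real.cos_neg]) (by ring)]
  rw [ccTerm_eval_neg s (-(Real.pi/6) + 4*Real.pi/3) 0 (Real.cos (5*Real.pi/12))
      (3*Real.pi/4) n 2
    (by rw [show ((-(Real.pi/6) + 4*Real.pi/3 : ℝ) - 0)/2 = 7*Real.pi/12 by ring,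
      show (7*Real.pi/12 : ℝ) = Real.pi - 5*Real.pi/12 by ring, Real.cos_pi_sub]) (by ring)]
  rw [ccTerm_eval_pos s (-(Real.pi/6) + 4*Real.pi/3) (0 + 2*Real.pi/3) (Real.cos (Real.pi/4))
      (3*Real.pi/4) n 1
    (by rw [show ((-(Real.pi/6) + 4*Real.pi/3 : ℝ) - (0 + 2*Real.pi/3))/2 = Real.pi/4 by ring])
    (by ring)]
  rw [ccTerm_eval_pos s (-(Real.pi/6) + 4*Real.pi/3) (0 + 4*Real.pi/3) (Real.cos (Real.pi/12))
      (-(Real.pi/4)) n 2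
    (by rw [show ((-(Real.pi/6) + 4*Real.pi/3 : ℝ) - (0 + 4*Real.pi/3))/2 = -(Real.pi/12) by ring,
      Real.cos_neg]) (by ring)]
  ring

lemma qp_exp (k : ℤ) : ((qpCoeff k : ℝ) : ℂ)
    = (Complex.exp (Complex.I * (((k : ℝ) * Real.pi / 4 : ℝ) : ℂ))
      + Complex.exp (-(Complex.I * (((k : ℝ) * Real.pi / 4 : ℝ) : ℂ)))) / 2 := by
  rw [qpCoeff, Complex.ofReal_cos]
  have h := Complex.two_cos ((((k : ℝ) * Real.pi / 4 : ℝ)) : ℂ)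
  have e1 : Complex.exp ((((k : ℝ) * Real.pi / 4 : ℝ) : ℂ) * Complex.I)
      = Complex.exp (Complex.I * (((k : ℝ) * Real.pi / 4 : ℝ) : ℂ)) := by congr 1; ring
  have e2 : Complex.exp (-(((k : ℝ) * Real.pi / 4 : ℝ) : ℂ) * Complex.I)
      = Complex.exp (-(Complex.I * (((k : ℝ) * Real.pi / 4 : ℝ) : ℂ))) := by congr 1; ring
  rw [e1, e2] at h
  linear_combination h / 2

lemma Gf_coeff3 (s φ : ℝ) (i : ℤ) :
    fourierCoeff (Gf s φ : AddCircle (2 * Real.pi) → ℂ) (3*i)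
      = Complex.exp (Complex.I * ((3*i : ℤ) : ℂ) * (φ : ℂ)) * cc s 0 (3*i) := by
  rw [Gf_coeff, tau_mul_three]
  ring

lemma main_hasSum (n : ℤ) (r : ℝ) (φ : ℝ) :
    HasSum (fun i : ℤ => fourierCoeff (Gf r φ : AddCircle (2 * Real.pi) → ℂ) (3*i)
        * fourierCoeff (Gf r 0 : AddCircle (2 * Real.pi) → ℂ) (3*(n - i)))
      (fourierCoeff (fun x : AddCircle (2 * Real.pi) => Gf r φ x * Gf r 0 x) (3*n)) := by
  have h := conv_hasSum (Gf r φ) (Gf r 0) (3*n)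
  have hinj : Function.Injective (fun i : ℤ => 3*i) := by
    intro a b hab
    simpa using hab
  have hvan : ∀ k ∉ Set.range (fun i : ℤ => 3*i),
      fourierCoeff (Gf r φ : AddCircle (2 * Real.pi) → ℂ) k
        * fourierCoeff (Gf r 0 : AddCircle (2 * Real.pi) → ℂ) (3*n - k) = 0 := by
    intro k hk
    have h3 : ¬ ((3:ℤ) ∣ k) := by
      rintro ⟨c, hc⟩
      exact hk ⟨c, by simpa using hc.symm⟩
    rw [Gf_coeff, tau_not_dvd k h3]
    ring
  have h2 := (Function.Injective.hasSum_iff hinj hvan).mpr h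
  have heq : ((fun k : ℤ => fourierCoeff (Gf r φ : AddCircle (2 * Real.pi) → ℂ) k
      * fourierCoeff (Gf r 0 : AddCircle (2 * Real.pi) → ℂ) (3*n - k)) ∘ (fun i : ℤ => 3*i))
      = fun i : ℤ => fourierCoeff (Gf r φ : AddCircle (2 * Real.pi) → ℂ) (3*i)
        * fourierCoeff (Gf r 0 : AddCircle (2 * Real.pi) → ℂ) (3*(n - i)) := by
    funext i
    simp only [Function.comp_apply]
    rw [show 3*n - 3*i = 3*(n-i) by ring]
  rw [heq] at h2
  exact h2

lemma key_term (n i : ℤ) (r : ℝ) :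
    ((qpCoeff i * qpCoeff (n - i) * besselJ (3 * i) r * besselJ (3 * (n - i)) r : ℝ) : ℂ)
      = (1/2) * ((qpCoeff n : ℝ) : ℂ)
          * Complex.exp (Complex.I * (n:ℂ) * ((-(3*Real.pi/2) : ℝ) : ℂ))
          * (cc r 0 (3*i) * cc r 0 (3*(n - i)))
        + (1/4) * Complex.exp (Complex.I * (n:ℂ) * ((-(Real.pi/4) : ℝ) : ℂ))
          * Complex.exp (Complex.I * (n:ℂ) * ((-(3*Real.pi/2) : ℝ) : ℂ))
          * (Complex.exp (Complex.I * ((3*i : ℤ):ℂ) * ((Real.pi/6 : ℝ) : ℂ))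
            * cc r 0 (3*i) * cc r 0 (3*(n - i)))
        + (1/4) * Complex.exp (Complex.I * (n:ℂ) * ((Real.pi/4 : ℝ) : ℂ))
          * Complex.exp (Complex.I * (n:ℂ) * ((-(3*Real.pi/2) : ℝ) : ℂ))
          * (Complex.exp (Complex.I * ((3*i : ℤ):ℂ) * ((-(Real.pi/6) : ℝ) : ℂ))
            * cc r 0 (3*i) * cc r 0 (3*(n - i))) := by
  rw [Complex.ofReal_mul, Complex.ofReal_mul, Complex.ofReal_mul]
  rw [show ((qpCoeff i : ℝ) : ℂ) * ((qpCoeff (n - i) : ℝ) : ℂ) * ((besselJ (3*i) r : ℝ) : ℂ)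
      * ((besselJ (3*(n-i)) r : ℝ) : ℂ)
      = ((qpCoeff i : ℝ) : ℂ) * ((qpCoeff (n-i) : ℝ) : ℂ) * (((besselJ (3*i) r : ℝ) : ℂ)
        * ((besselJ (3*(n-i)) r : ℝ) : ℂ)) by ring]
  rw [besselJ_cc (3*i) r, besselJ_cc (3*(n-i)) r, qp_exp i, qp_exp (n-i), qp_exp n]
  set P := Complex.exp (Complex.I * (((i : ℝ) * Real.pi / 4 : ℝ) : ℂ)) with hP
  set P' := Complex.exp (-(Complex.I * (((i : ℝ) * Real.pi / 4 : ℝ) : ℂ))) with hP'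
  set Q := Complex.exp (Complex.I * ((((n - i : ℤ) : ℝ) * Real.pi / 4 : ℝ) : ℂ)) with hQ
  set Q' := Complex.exp (-(Complex.I * ((((n - i : ℤ) : ℝ) * Real.pi / 4 : ℝ) : ℂ))) with hQ'
  set R := Complex.exp (-(Complex.I * ((3*i : ℤ) : ℂ) * (Real.pi : ℂ)) / 2) with hR
  set S := Complex.exp (-(Complex.I * ((3*(n - i) : ℤ) : ℂ) * (Real.pi : ℂ)) / 2) with hS
  set d := Complex.exp (Complex.I * (n:ℂ) * ((Real.pi/4 : ℝ) : ℂ)) with hd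
  set d' := Complex.exp (Complex.I * (n:ℂ) * ((-(Real.pi/4) : ℝ) : ℂ)) with hd'
  set ε := Complex.exp (Complex.I * (n:ℂ) * ((-(3*Real.pi/2) : ℝ) : ℂ)) with hε
  set T := Complex.exp (Complex.I * ((3*i : ℤ):ℂ) * ((Real.pi/6 : ℝ) : ℂ)) with hT
  set T' := Complex.exp (Complex.I * ((3*i : ℤ):ℂ) * ((-(Real.pi/6) : ℝ) : ℂ)) with hT'
  set A := cc r 0 (3*i) with hA
  set B := cc r 0 (3*(n - i)) with hB
  have hNbr : Complex.exp (Complex.I * (((n : ℝ) * Real.pi / 4 : ℝ) : ℂ)) = d := by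
    rw [hd]; congr 1; push_cast; ring
  have hNbr' : Complex.exp (-(Complex.I * (((n : ℝ) * Real.pi / 4 : ℝ) : ℂ))) = d' := by
    rw [hd']; congr 1; push_cast; ring
  rw [hNbr, hNbr']
  have r1 : R * S = ε := by
    rw [hR, hS, hε, ← Complex.exp_add]; congr 1; push_cast; ring
  have r2 : P * Q = d := by
    rw [hP, hQ, hd, ← Complex.exp_add]; congr 1; push_cast; ring
  have r3 : P' * Q' = d' := by
    rw [hP', hQ', hd', ← Complex.exp_add]; congr 1; push_cast; ring
  have r4 : P * Q' = d' * T := by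
    rw [hP, hQ', hd', hT, ← Complex.exp_add, ← Complex.exp_add]; congr 1; push_cast; ring
  have r5 : P' * Q = d * T' := by
    rw [hP', hQ, hd, hT', ← Complex.exp_add, ← Complex.exp_add]; congr 1; push_cast; ring
  linear_combination ((A*B)/4) * R * S * (r2 + r3 + r4 + r5)
    + ((A*B)/4) * (d + d' + d'*T + d*T') * r1

lemma sqrt2_eq : Real.sqrt 2 = 2 * Real.cos (Real.pi/4) := by
  rw [Real.cos_pi_div_four]
  ring

lemma sqrtp_eq : Real.sqrt (2 + Real.sqrt 3) = 2 * Real.cos (Real.pi/12) := by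
  have hc : 0 ≤ Real.cos (Real.pi/12) := by
    apply Real.cos_nonneg_of_mem_Icc
    constructor <;> nlinarith [Real.pi_pos]
  have h := Real.cos_sq (Real.pi/12)
  rw [show 2*(Real.pi/12) = Real.pi/6 by ring, Real.cos_pi_div_six] at h
  have hsq : (2 * Real.cos (Real.pi/12))^2 = 2 + Real.sqrt 3 := by nlinarith [h]
  rw [← hsq, Real.sqrt_sq (by linarith)]

lemma sqrtm_eq : Real.sqrt (2 - Real.sqrt 3) = 2 * Real.cos (5*Real.pi/12) := by
  have hc : 0 ≤ Real.cos (5*Real.pi/12) := by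
    apply Real.cos_nonneg_of_mem_Icc
    constructor <;> nlinarith [Real.pi_pos]
  have h := Real.cos_sq (5*Real.pi/12)
  rw [show 2*(5*Real.pi/12) = Real.pi - Real.pi/6 by ring, Real.cos_pi_sub,
    Real.cos_pi_div_six] at h
  have hsq : (2 * Real.cos (5*Real.pi/12))^2 = 2 - Real.sqrt 3 := by nlinarith [h]
  rw [← hsq, Real.sqrt_sq (by linarith)]

/-- Quasipattern quadratic identity (first identity of the D12 proposition). -/
theorem quasipattern_quadratic_one (n : ℤ) :
    ∃ c₁ c₂ c₃ : ℝ, ∀ r : ℝ,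
      Summable (fun i : ℤ =>
        qpCoeff i * qpCoeff (n - i) * besselJ (3 * i) r * besselJ (3 * (n - i)) r) ∧
      (∑' i : ℤ, qpCoeff i * qpCoeff (n - i) * besselJ (3 * i) r * besselJ (3 * (n - i)) r)
        = 1/3 * qpCoeff n * besselJ (-(3 * n)) r + 1/6 * qpCoeff n * besselJ (3 * n) (2 * r)
          + c₁ * besselJ (3 * n) (Real.sqrt 2 * r)
          + c₂ * besselJ (3 * n) (Real.sqrt (2 + Real.sqrt 3) * r)
          + c₃ * besselJ (3 * n) (Real.sqrt (2 - Real.sqrt 3) * r) := by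
  refine ⟨(-1:ℝ)^n/6, 1/6, (-1:ℝ)^n/6, fun r => ?_⟩
  have hS0 := main_hasSum n r 0
  have hSp := main_hasSum n r (Real.pi/6)
  have hSm := main_hasSum n r (-(Real.pi/6))
  simp only [Gf_coeff3] at hS0 hSp hSm
  simp only [Complex.ofReal_zero, mul_zero, Complex.exp_zero, one_mul] at hS0 hSp hSm
  rw [P0eval] at hS0
  rw [Ppluseval] at hSp
  rw [Pminuseval] at hSm
  set d := Complex.exp (Complex.I * (n:ℂ) * ((Real.pi/4 : ℝ) : ℂ)) with hd
  set d' := Complex.exp (Complex.I * (n:ℂ) * ((-(Real.pi/4) : ℝ) : ℂ)) with hd'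
  set ε := Complex.exp (Complex.I * (n:ℂ) * ((-(3*Real.pi/2) : ℝ) : ℂ)) with hε
  set w := Complex.exp (Complex.I * (n:ℂ) * ((Real.pi : ℝ) : ℂ)) with hw
  set c0 : ℂ := (1/2) * ((qpCoeff n : ℝ) : ℂ) * ε with hc0
  set cp : ℂ := (1/4) * d' * ε with hcp
  set cm : ℂ := (1/4) * d * ε with hcm
  have hcomb := (hS0.mul_left c0).add ((hSp.mul_left cp).add (hSm.mul_left cm))
  have hfinal : HasSum (fun i : ℤ =>
      ((qpCoeff i * qpCoeff (n - i) * besselJ (3 * i) r * besselJ (3 * (n - i)) r : ℝ) : ℂ))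
      (c0 * ((1/3) * cc (2*r) 0 (3*n) + (2/3) * w * cc r 0 (3*n))
        + (cp * ((1/3) * (d * cc (2*r*Real.cos (Real.pi/12)) 0 (3*n)
            + Complex.exp (Complex.I * (n:ℂ) * ((5*Real.pi/4 : ℝ) : ℂ))
              * cc (2*r*Real.cos (5*Real.pi/12)) 0 (3*n)
            + Complex.exp (Complex.I * (n:ℂ) * ((5*Real.pi/4 : ℝ) : ℂ))
              * cc (2*r*Real.cos (Real.pi/4)) 0 (3*n)))
          + cm * ((1/3) * (d' * cc (2*r*Real.cos (Real.pi/12)) 0 (3*n)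
            + Complex.exp (Complex.I * (n:ℂ) * ((3*Real.pi/4 : ℝ) : ℂ))
              * cc (2*r*Real.cos (5*Real.pi/12)) 0 (3*n)
            + Complex.exp (Complex.I * (n:ℂ) * ((3*Real.pi/4 : ℝ) : ℂ))
              * cc (2*r*Real.cos (Real.pi/4)) 0 (3*n))))) := by
    convert hcomb using 2
    · rfl
    rw [key_term]
    ring
  have hsummable : Summable (fun i : ℤ =>
      qpCoeff i * qpCoeff (n - i) * besselJ (3 * i) r * besselJ (3 * (n - i)) r) := by
    have := hfinal.summable
    exact Complex.summable_ofReal.mp this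
  refine ⟨hsummable, ?_⟩
  apply Complex.ofReal_injective
  rw [Complex.ofReal_tsum]
  rw [hfinal.tsum_eq]
  -- now prove S = ↑(RHS)
  have q1 : ε * w = Complex.exp (-(Complex.I * ((-(3*n) : ℤ) : ℂ) * (Real.pi : ℂ)) / 2) := by
    rw [hε, hw, ← Complex.exp_add,
      show Complex.I * (n:ℂ) * ((-(3*Real.pi/2) : ℝ) : ℂ) + Complex.I * (n:ℂ) * ((Real.pi : ℝ) : ℂ)
        = -(Complex.I * ((-(3*n) : ℤ) : ℂ) * (Real.pi : ℂ)) / 2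
          + ((-n : ℤ) : ℂ) * (2 * (Real.pi : ℂ) * Complex.I) by push_cast; ring,
      Complex.exp_add, Complex.exp_int_mul_two_pi_mul_I, mul_one]
  have q2 : Complex.exp (Complex.I * (n:ℂ) * ((5*Real.pi/4 : ℝ) : ℂ)) = d * w := by
    rw [hd, hw, ← Complex.exp_add]
    congr 1
    push_cast
    ring
  have q3 : Complex.exp (Complex.I * (n:ℂ) * ((3*Real.pi/4 : ℝ) : ℂ)) = d' * w := by
    rw [hd', hw, ← Complex.exp_add]
    congr 1
    push_cast
    ring
  have q4 : d * d' = 1 := by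
    rw [hd, hd', ← Complex.exp_add,
      show Complex.I * (n:ℂ) * ((Real.pi/4 : ℝ) : ℂ) + Complex.I * (n:ℂ) * ((-(Real.pi/4) : ℝ) : ℂ)
        = 0 by push_cast; ring, Complex.exp_zero]
  have q5 : ((-1 : ℂ))^n = w := by
    rw [hw, show Complex.I * (n:ℂ) * ((Real.pi : ℝ) : ℂ) = (n:ℂ) * ((Real.pi : ℂ) * Complex.I) by
      push_cast; ring, Complex.exp_int_mul, Complex.exp_pi_mul_I]
  have q6 : Complex.exp (-(Complex.I * ((3*n : ℤ) : ℂ) * (Real.pi : ℂ)) / 2) = ε := by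
    rw [hε]
    congr 1
    push_cast
    ring
  rw [q2, q3]
  rw [show Real.sqrt 2 * r = 2*r*Real.cos (Real.pi/4) by rw [sqrt2_eq]; ring]
  rw [show Real.sqrt (2 + Real.sqrt 3) * r = 2*r*Real.cos (Real.pi/12) by rw [sqrtp_eq]; ring]
  rw [show Real.sqrt (2 - Real.sqrt 3) * r = 2*r*Real.cos (5*Real.pi/12) by rw [sqrtm_eq]; ring]
  simp only [Complex.ofReal_add, Complex.ofReal_mul, Complex.ofReal_div, Complex.ofReal_zpow,
    Complex.ofReal_neg, Complex.ofReal_one, Complex.ofReal_ofNat]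
  rw [besselJ_cc (-(3*n)) r, besselJ_cc (3*n) (2*r), besselJ_cc (3*n) (2*r*Real.cos (Real.pi/4)),
    besselJ_cc (3*n) (2*r*Real.cos (Real.pi/12)), besselJ_cc (3*n) (2*r*Real.cos (5*Real.pi/12)),
    cc_even]
  rw [q5, ← q1, q6]
  linear_combination (1/6 * ε * (cc (2*r*Real.cos (Real.pi/12)) 0 (3*n)
    + w * cc (2*r*Real.cos (5*Real.pi/12)) 0 (3*n)
    + w * cc (2*r*Real.cos (Real.pi/4)) 0 (3*n))) * q4

end
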